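/- Let M ≥ 1 and let x : Fin M → ℝ → ℝ be a family of functions each differentiable at a point r ∈ ℝ. Suppose that for every index i attaining the maximum at r, i.e. every i with x i r = ⨆ j, x j r, the derivative satisfies deriv (x i) r < 0. Then there exists ε > 0 such that for every s with r < s ≤ r + ε, ⨆ j, x j s < ⨆ j, x j r. -/

import Mathlib

open Filter Topology

/-- If the derivative at `r` is negative, then on a right-neighborhood the value drops
strictly below `f r`. -/
lemma eventually_lt_of_deriv_neg {f : ℝ → ℝ} {r : ℝ} (hf : DifferentiableAt ℝ f r)
    (h : deriv f r < 0) : ∀ᶠ s in 𝓝[>] r, f s < f r := by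
  have hs : Tendsto (slope f r) (𝓝[≠] r) (𝓝 (deriv f r)) :=
    (hasDerivAt_iff_tendsto_slope.1 hf.hasDerivAt)
  have hs' : Tendsto (slope f r) (𝓝[>] r) (𝓝 (deriv f r)) :=
    hs.mono_left (nhdsWithin_mono r fun s hs => ne_of_gt hs)
  have hlt : ∀ᶠ s in 𝓝[>] r, slope f r s < 0 := hs'.eventually_lt_const h
  filter_upwards [hlt, self_mem_nhdsWithin] with s hslope (hsr : r < s)
  have := mul_neg_of_pos_of_neg (sub_pos.2 hsr) hslope
  rw [slope_def_field, div_eq_inv_mul] at hslope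
  nlinarith [sub_pos.2 hsr, hslope, mul_pos (sub_pos.2 hsr) (inv_pos.2 (sub_pos.2 hsr))]

/-- Finite-max descent lemma: if every index attaining the maximum of finitely many
differentiable functions at `r` has strictly negative derivative there, then the
pointwise maximum strictly decreases on some right-neighborhood of `r`. -/
theorem max_strict_decrease_of_neg_deriv_at_argmax (M : ℕ) (hM : 1 ≤ M)
    (x : Fin M → ℝ → ℝ) (r : ℝ)
    (hdiff : ∀ i, DifferentiableAt ℝ (x i) r)
    (hneg : ∀ i : Fin M, x i r = (⨆ j, x j r) → deriv (x i) r < 0) :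
    ∃ ε > 0, ∀ s : ℝ, r < s → s ≤ r + ε → (⨆ j, x j s) < ⨆ j, x j r := by
  haveI : Nonempty (Fin M) := ⟨⟨0, hM⟩⟩
  set V : ℝ := ⨆ j, x j r with hV
  have hle : ∀ i, x i r ≤ V := fun i => le_ciSup (Set.Finite.bddAbove (Set.finite_range (fun j => x j r))) i
  have key : ∀ i, ∀ᶠ s in 𝓝[>] r, x i s < V := by
    intro i
    rcases eq_or_lt_of_le (hle i) with heq | hlt
    · have := eventually_lt_of_deriv_neg (hdiff i) (hneg i heq)
      filter_upwards [this] with s hs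
      exact hs.trans_le (heq ▸ le_refl _)
    · have hc : ContinuousAt (x i) r := (hdiff i).continuousAt
      have : ∀ᶠ s in 𝓝 r, x i s < V := hc.eventually_lt continuousAt_const hlt
      exact this.filter_mono nhdsWithin_le_nhds
  have hall : ∀ᶠ s in 𝓝[>] r, ∀ i, x i s < V := eventually_all.2 key
  rcases (mem_nhdsGT_iff_exists_Ioc_subset).1 hall with ⟨u, hu, hsub⟩
  refine ⟨u - r, sub_pos.2 hu, fun s hrs hsu => ?_⟩
  have hs : s ∈ Set.Ioc r u := ⟨hrs, by linarith⟩
  have h := hsub hs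
  obtain ⟨i, hi⟩ := Finite.exists_max (fun j => x j s)
  calc (⨆ j, x j s) ≤ x i s := ciSup_le hi
    _ < V := h i
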